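/- The number of type-A generalized k-triangulations of the n-gon satisfies the determinant identity det(C_{n−i−j})_{i,j=1,…,k} = ∏_{1≤i≤j≤n−2k−1} (i+j+2k)/(i+j), where C_m is the m-th Catalan number. -/

import Mathlib

open Matrix Finset

noncomputable def Ff (k a : ℕ) : ℚ :=
  ∏ i ∈ Finset.Icc 1 (a - 1), ∏ j ∈ Finset.Icc i (a - 1),
    (((i : ℚ) + j + 2 * k) / ((i : ℚ) + j))

lemma Ff_pos (k a : ℕ) : 0 < Ff k a := by
  apply Finset.prod_pos
  intro i hi
  apply Finset.prod_pos
  intro j hj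
  simp only [Finset.mem_Icc] at hi hj
  have h1 : (1 : ℚ) ≤ i := by exact_mod_cast hi.1
  have h2 : (i : ℚ) ≤ j := by exact_mod_cast hj.1
  positivity

lemma tele (c i : ℕ) (hc : 0 < c + i) :
    ∀ b, i ≤ b + 1 →
      ∏ j ∈ Finset.Icc i b, (((c : ℚ) + j + 2) / ((c : ℚ) + j)) =
        ((c : ℚ) + b + 1) * ((c : ℚ) + b + 2) / (((c : ℚ) + i) * ((c : ℚ) + i + 1)) := by
  intro b
  induction b with
  | zero =>
    intro hb
    interval_cases i
    · have hc' : (0:ℚ) < c := by exact_mod_cast hc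
      rw [show Finset.Icc 0 0 = {0} from rfl]
      push_cast
      rw [Finset.prod_singleton]
      field_simp
      ring
    · rw [show Finset.Icc 1 0 = ∅ by rfl, Finset.prod_empty]
      have hc' : (0:ℚ) < (c:ℚ) + 1 := by positivity
      field_simp
      push_cast; ring
  | succ b ih =>
    intro hb
    rcases Nat.lt_or_ge (b+1) i with h | h
    · have hi : i = b + 2 := by omega
      subst hi
      rw [show Finset.Icc (b+2) (b+1) = ∅ by simp, Finset.prod_empty]
      have : (0:ℚ) < (c:ℚ) + (b+2) := by
        have : (0:ℚ) ≤ (c:ℚ) := by positivity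
        nlinarith [Nat.cast_nonneg (α := ℚ) b]
      push_cast
      field_simp
      ring
    · rw [Finset.prod_Icc_succ_top (by omega), ih (by omega)]
      have h1 : (0:ℚ) < (c:ℚ) + i := by exact_mod_cast hc
      have h2 : (0:ℚ) < (c:ℚ) + b + 1 := by
        have : (0:ℚ) ≤ (c:ℚ) + b := by positivity
        linarith
      push_cast
      field_simp
      ring

lemma Ff_succ (k a : ℕ) : Ff k (a+1) =
    Ff k a * ∏ t ∈ Finset.Icc (a+1) (2*a), (((t:ℚ) + 2*k) / t) := by
  rcases Nat.eq_zero_or_pos a with rfl | ha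
  · simp [Ff]
  obtain ⟨b, rfl⟩ := Nat.exists_eq_add_of_le ha
  simp only [Ff, Nat.add_sub_cancel_left, Nat.add_sub_cancel]
  have step1 : ∀ i ∈ Finset.Icc 1 (1+b),
      ∏ j ∈ Finset.Icc i (1+b), (((i : ℚ) + j + 2 * k) / ((i : ℚ) + j))
        = (∏ j ∈ Finset.Icc i b, (((i : ℚ) + j + 2 * k) / ((i : ℚ) + j)))
          * (((i : ℚ) + (1+b) + 2 * k) / ((i : ℚ) + (1+b))) := by
    intro i hi
    simp only [Finset.mem_Icc] at hi
    rw [show 1 + b = b + 1 by ring, Finset.prod_Icc_succ_top (by omega)]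
    push_cast; ring
  rw [Finset.prod_congr rfl step1, Finset.prod_mul_distrib]
  congr 1
  · rw [show 1 + b = b + 1 by ring, Finset.prod_Icc_succ_top (by omega)]
    rw [show Finset.Icc (b+1) b = ∅ by simp, Finset.prod_empty, mul_one]
  · rw [show Finset.Icc (1+b+1) (2*(1+b)) = (Finset.Icc 1 (1+b)).map (addRightEmbedding (1+b)) by
      rw [Finset.map_add_right_Icc]; congr 1 <;> ring]
    rw [Finset.prod_map]
    apply Finset.prod_congr rfl
    intro i hi
    simp only [addRightEmbedding_apply]
    push_cast; ring_nf

/-- ratio in the `k` direction -/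
lemma Ff_k_succ (k b : ℕ) : Ff (k+1) (b+1) =
    Ff k (b+1) * ∏ i ∈ Finset.Icc 1 b,
      ((((i:ℚ)+b+2*k)+1) * (((i:ℚ)+b+2*k)+2) /
        ((2*(i:ℚ)+2*k) * (2*(i:ℚ)+2*k+1))) := by
  simp only [Ff, Nat.add_sub_cancel]
  rw [← Finset.prod_mul_distrib]
  apply Finset.prod_congr rfl
  intro i hi
  simp only [Finset.mem_Icc] at hi
  have hi1 : (1:ℚ) ≤ (i:ℚ) := by exact_mod_cast hi.1
  have key : ∀ j ∈ Finset.Icc i b,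
      (((i : ℚ) + j + 2 * ((k+1 : ℕ):ℚ)) / ((i : ℚ) + j))
        = (((i + 2*k : ℕ) : ℚ) + j + 2) / (((i + 2*k : ℕ):ℚ) + j)
          * (((i : ℚ) + j + 2 * k) / ((i : ℚ) + j)) := by
    intro j hj
    have hj0 : (0:ℚ) ≤ (j:ℚ) := by positivity
    have h1 : ((i:ℚ) + j) ≠ 0 := by nlinarith
    have h2 : ((((i + 2*k : ℕ) : ℚ) + j) * ((i:ℚ) + j)) ≠ 0 := by
      push_cast
      have : (0:ℚ) ≤ 2*(k:ℚ) := by positivity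
      nlinarith
    rw [div_mul_div_comm, div_eq_div_iff h1 h2]
    push_cast
    ring
  have expand : ∏ j ∈ Finset.Icc i b, (((i : ℚ) + j + 2 * ((k+1 : ℕ):ℚ)) / ((i : ℚ) + j))
      = (∏ j ∈ Finset.Icc i b, ((((i + 2*k : ℕ) : ℚ) + j + 2) / (((i + 2*k : ℕ):ℚ) + j)))
        * ∏ j ∈ Finset.Icc i b, (((i : ℚ) + j + 2 * k) / ((i : ℚ) + j)) := by
    rw [← Finset.prod_mul_distrib]
    exact Finset.prod_congr rfl key
  rw [expand, tele (i + 2*k) i (by omega) b (by omega)]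
  push_cast
  ring

lemma Ff_zero (k : ℕ) : Ff k 0 = 1 := by simp [Ff]
lemma Ff_one (k : ℕ) : Ff k 1 = 1 := by simp [Ff]
lemma Ff_two (k : ℕ) : Ff k 2 = (k:ℚ) + 1 := by
  simp [Ff]
  norm_num
  ring

lemma idA (k a : ℕ) :
    (Ff k (a+1))^2 * (((a:ℚ)+1) * (2*a+2*k+1) * (2*a+2*k+2)) =
      Ff k a * Ff k (a+2) * (((a:ℚ)+1+2*k) * (2*a+1) * (2*a+2)) := by
  have h2 := Ff_succ k (a+1)
  rw [Ff_succ k a] at h2 ⊢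
  rw [h2]
  set F := Ff k a with hF
  set r := ∏ t ∈ Finset.Icc (a+1) (2*a), (((t:ℚ) + 2*k) / t) with hr
  set r' := ∏ t ∈ Finset.Icc (a+1+1) (2*(a+1)), (((t:ℚ) + 2*k) / t) with hr'
  -- relation between r and r'
  have hP1 : ∏ t ∈ Finset.Icc (a+1) (2*a+2), (((t:ℚ) + 2*k) / t)
      = r * (((2*a+1:ℕ):ℚ) + 2*k) / (2*a+1:ℕ) * ((((2*a+2:ℕ):ℚ) + 2*k) / (2*a+2:ℕ)) := by
    rw [show 2*a+2 = (2*a+1)+1 from rfl, Finset.prod_Icc_succ_top (by omega),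
      Finset.prod_Icc_succ_top (by omega)]
    push_cast
    ring
  have hP2 : ∏ t ∈ Finset.Icc (a+1) (2*a+2), (((t:ℚ) + 2*k) / t)
      = ((((a+1:ℕ):ℚ) + 2*k) / (a+1:ℕ)) * r' := by
    rw [← Finset.insert_Icc_add_one_left_eq_Icc (by omega), Finset.prod_insert (by simp), hr',
      show (2*(a+1)) = 2*a+2 by ring]
  have hrel := hP1.symm.trans hP2
  have ha1 : ((a:ℚ)+1) ≠ 0 := by positivity
  have h2a1 : (2*(a:ℚ)+1) ≠ 0 := by positivity
  have h2a2 : (2*(a:ℚ)+2) ≠ 0 := by positivity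
  push_cast at hrel
  field_simp at hrel
  -- hrel is now a cleared polynomial relation between r and r'
  have hrel' : r * (((a:ℚ)+1) * (2*a+2*k+1) * (2*a+2*k+2)) =
      r' * ((((a:ℚ)+1+2*k) * (2*a+1) * (2*a+2))) := by
    linear_combination (2*(a:ℚ)+2) * hrel
  linear_combination (F^2 * r) * hrel'

lemma idB (k a : ℕ) :
    Ff (k+2) a * Ff k (a+2) * ((2*(a:ℚ)+2*k+3) * (2*a+2*k+4)) =
      Ff (k+1) a * Ff (k+1) (a+2) * ((2*(k:ℚ)+2) * (2*k+3)) := by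
  rcases Nat.eq_zero_or_pos a with rfl | ha
  · rw [Ff_zero, Ff_zero, Ff_two, Ff_two]
    push_cast
    ring
  obtain ⟨b, rfl⟩ := Nat.exists_eq_add_of_le ha
  rw [show 1 + b = b + 1 by ring]
  rw [show b + 1 + 2 = (b+2) + 1 from rfl]
  rw [Ff_k_succ (k+1) b, Ff_k_succ k (b+2)]
  -- normalize the two correction products
  have hA1 : (∏ i ∈ Finset.Icc 1 b,
      ((((i:ℚ)+b+2*((k+1:ℕ):ℚ))+1) * (((i:ℚ)+b+2*((k+1:ℕ):ℚ))+2) /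
        ((2*(i:ℚ)+2*((k+1:ℕ):ℚ)) * (2*(i:ℚ)+2*((k+1:ℕ):ℚ)+1))))
      = (∏ i ∈ Finset.Icc 1 b, (((i:ℚ)+b+2*k+3) * ((i:ℚ)+b+2*k+4)))
        / ∏ i ∈ Finset.Icc 1 b, ((2*(i:ℚ)+2*k+2) * (2*(i:ℚ)+2*k+3)) := by
    rw [← Finset.prod_div_distrib]
    apply Finset.prod_congr rfl
    intro i hi
    push_cast
    ring_nf
  have hA2 : (∏ i ∈ Finset.Icc 1 (b+2),
      ((((i:ℚ)+(b+2:ℕ)+2*(k:ℚ))+1) * (((i:ℚ)+(b+2:ℕ)+2*(k:ℚ))+2) /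
        ((2*(i:ℚ)+2*(k:ℚ)) * (2*(i:ℚ)+2*(k:ℚ)+1))))
      = (∏ i ∈ Finset.Icc 1 (b+2), (((i:ℚ)+b+2*k+3) * ((i:ℚ)+b+2*k+4)))
        / ∏ i ∈ Finset.Icc 1 (b+2), ((2*(i:ℚ)+2*k) * (2*(i:ℚ)+2*k+1)) := by
    rw [← Finset.prod_div_distrib]
    apply Finset.prod_congr rfl
    intro i hi
    push_cast
    ring_nf
  rw [hA1, hA2]
  have hPD1 : (∏ i ∈ Finset.Icc 1 b, ((2*(i:ℚ)+2*k+2) * (2*(i:ℚ)+2*k+3)))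
      = ∏ i ∈ Finset.Icc 2 (b+1), ((2*(i:ℚ)+2*k) * (2*(i:ℚ)+2*k+1)) := by
    rw [show Finset.Icc 2 (b+1) = (Finset.Icc 1 b).map (addRightEmbedding 1) by
      rw [Finset.map_add_right_Icc]]
    rw [Finset.prod_map]
    apply Finset.prod_congr rfl
    intro i hi
    simp only [addRightEmbedding_apply]
    push_cast
    ring
  have hPN : (∏ i ∈ Finset.Icc 1 (b+2), (((i:ℚ)+b+2*k+3) * ((i:ℚ)+b+2*k+4)))
      = (∏ i ∈ Finset.Icc 1 b, (((i:ℚ)+b+2*k+3) * ((i:ℚ)+b+2*k+4)))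
        * ((2*(b:ℚ)+2*k+4)*(2*(b:ℚ)+2*k+5)) * ((2*(b:ℚ)+2*k+5)*(2*(b:ℚ)+2*k+6)) := by
    rw [Finset.prod_Icc_succ_top (by omega), Finset.prod_Icc_succ_top (by omega)]
    push_cast
    ring
  have hPD2 : (∏ i ∈ Finset.Icc 1 (b+2), ((2*(i:ℚ)+2*k) * (2*(i:ℚ)+2*k+1)))
      = ((2*(k:ℚ)+2) * (2*(k:ℚ)+3))
        * (∏ i ∈ Finset.Icc 2 (b+1), ((2*(i:ℚ)+2*k) * (2*(i:ℚ)+2*k+1)))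
        * ((2*(b:ℚ)+2*k+4)*(2*(b:ℚ)+2*k+5)) := by
    rw [← Finset.insert_Icc_add_one_left_eq_Icc (by omega), Finset.prod_insert (by simp),
      Finset.prod_Icc_succ_top (by omega)]
    push_cast
    ring
  have hPD1pos : (0:ℚ) < ∏ i ∈ Finset.Icc 2 (b+1), ((2*(i:ℚ)+2*k) * (2*(i:ℚ)+2*k+1)) := by
    apply Finset.prod_pos
    intro i hi
    simp only [Finset.mem_Icc] at hi
    have : (2:ℚ) ≤ (i:ℚ) := by exact_mod_cast hi.1
    have : (0:ℚ) ≤ (k:ℚ) := by positivity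
    nlinarith
  have key : ((∏ i ∈ Finset.Icc 1 b, (((i:ℚ)+b+2*k+3) * ((i:ℚ)+b+2*k+4)))
        / ∏ i ∈ Finset.Icc 1 b, ((2*(i:ℚ)+2*k+2) * (2*(i:ℚ)+2*k+3)))
        * ((2 * ((b:ℚ) + 1) + 2 * k + 3) * (2 * ((b:ℚ) + 1) + 2 * k + 4))
      = ((∏ i ∈ Finset.Icc 1 (b+2), (((i:ℚ)+b+2*k+3) * ((i:ℚ)+b+2*k+4)))
        / ∏ i ∈ Finset.Icc 1 (b+2), ((2*(i:ℚ)+2*k) * (2*(i:ℚ)+2*k+1)))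
        * ((2 * (k:ℚ) + 2) * (2 * (k:ℚ) + 3)) := by
    rw [hPN, hPD1, hPD2]
    have h1 : (0:ℚ) < (2*(k:ℚ)+2) * (2*(k:ℚ)+3) := by positivity
    have h2 : (0:ℚ) < (2*(b:ℚ)+2*k+4)*(2*(b:ℚ)+2*k+5) := by positivity
    field_simp
    ring
  push_cast
  linear_combination (Ff (k + 1) (b + 1) * Ff k (b + 2 + 1)) * key

lemma Ff_rec (k a : ℕ) :
    Ff (k+2) a * Ff k (a+2) =
      Ff (k+1) a * Ff (k+1) (a+2) - (Ff (k+1) (a+1))^2 := by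
  have hA := idA (k+1) a
  have hB := idB k a
  push_cast at hA hB
  have hc1 : ((2*(a:ℚ)+2*k+3) * (2*a+2*k+4)) ≠ 0 := by positivity
  have hc3 : (((a:ℚ)+1) * (2*a+2*(k+1)+1) * (2*a+2*(k+1)+2)) ≠ 0 := by positivity
  apply mul_right_cancel₀ (mul_ne_zero hc1 hc3)
  linear_combination (((a:ℚ)+1) * (2*a+2*(k+1)+1) * (2*a+2*(k+1)+2)) * hB
    + ((2*(a:ℚ)+2*k+3) * (2*a+2*k+4)) * hA

lemma Ff_catalan (a : ℕ) : Ff 1 a = (catalan a : ℚ) := by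
  induction a with
  | zero => simp [Ff_zero]
  | succ a ih =>
    rw [Ff_succ, ih]
    rcases Nat.eq_zero_or_pos a with rfl | ha
    · simp
    have ht : ∏ t ∈ Finset.Icc (a+1) (2*a), (((t:ℚ) + 2) / t)
        = (2*(a:ℚ)+1)*(2*(a:ℚ)+2)/(((a:ℚ)+1)*((a:ℚ)+2)) := by
      have h0 := tele 0 (a+1) (by omega) (2*a) (by omega)
      push_cast at h0
      calc ∏ t ∈ Finset.Icc (a+1) (2*a), (((t:ℚ) + 2) / t)
          = ∏ t ∈ Finset.Icc (a+1) (2*a), ((0 + (t:ℚ) + 2) / (0 + (t:ℚ))) := by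
            apply Finset.prod_congr rfl; intro t hts; ring_nf
        _ = (2*(a:ℚ)+1)*(2*(a:ℚ)+2)/(((a:ℚ)+1)*((a:ℚ)+2)) := by rw [h0]; ring_nf
    have hgoal : ∏ t ∈ Finset.Icc (a+1) (2*a), (((t:ℚ) + 2*((1:ℕ):ℚ)) / t)
        = ∏ t ∈ Finset.Icc (a+1) (2*a), (((t:ℚ) + 2) / t) := by
      apply Finset.prod_congr rfl; intro t hts; norm_num
    rw [hgoal, ht]
    -- catalan recurrence : (a+2) * catalan (a+1) = 2*(2a+1) * catalan a
    have hcat : ((a:ℚ)+2) * (catalan (a+1) : ℚ) = 2*(2*(a:ℚ)+1) * (catalan a : ℚ) := by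
      have h1 := succ_mul_catalan_eq_centralBinom a
      have h2 := succ_mul_catalan_eq_centralBinom (a+1)
      have h3 := Nat.succ_mul_centralBinom_succ a
      have e1 : ((a+1) * catalan a : ℕ) = (Nat.centralBinom a : ℕ) := h1
      have e2 : ((a+2) * catalan (a+1) : ℕ) = (Nat.centralBinom (a+1) : ℕ) := h2
      have e3 : ((a+1) * Nat.centralBinom (a+1) : ℕ) = (2 * (2*a+1) * Nat.centralBinom a : ℕ) := h3
      have q1 : ((a:ℚ)+1) * (catalan a : ℚ) = (Nat.centralBinom a : ℚ) := by exact_mod_cast e1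
      have q2 : ((a:ℚ)+2) * (catalan (a+1) : ℚ) = (Nat.centralBinom (a+1) : ℚ) := by exact_mod_cast e2
      have q3 : ((a:ℚ)+1) * (Nat.centralBinom (a+1) : ℚ)
          = 2 * (2*(a:ℚ)+1) * (Nat.centralBinom a : ℚ) := by exact_mod_cast e3
      have ha1 : ((a:ℚ)+1) ≠ 0 := by positivity
      apply mul_left_cancel₀ ha1
      linear_combination ((a:ℚ)+1)*q2 + q3 - 2*(2*(a:ℚ)+1)*q1
    rw [mul_div_assoc', div_eq_iff (by positivity)]
    linear_combination (-(a:ℚ)-1) * hcat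



lemma schur2 {m : ℕ} (M : Matrix (Fin m) (Fin m) ℚ) [Invertible M]
    (P : Matrix (Fin m) (Fin 2) ℚ) (Q : Matrix (Fin 2) (Fin m) ℚ)
    (R : Matrix (Fin 2) (Fin 2) ℚ) :
    (Matrix.fromBlocks M P Q R).det * M.det =
      (Matrix.fromBlocks M (P.submatrix id (fun _ : Fin 1 => (0:Fin 2)))
        (Q.submatrix (fun _ : Fin 1 => (0:Fin 2)) id)
        (R.submatrix (fun _ : Fin 1 => (0:Fin 2)) (fun _ => (0:Fin 2)))).det *
      (Matrix.fromBlocks M (P.submatrix id (fun _ : Fin 1 => (1:Fin 2)))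
        (Q.submatrix (fun _ : Fin 1 => (1:Fin 2)) id)
        (R.submatrix (fun _ : Fin 1 => (1:Fin 2)) (fun _ => (1:Fin 2)))).det -
      (Matrix.fromBlocks M (P.submatrix id (fun _ : Fin 1 => (1:Fin 2)))
        (Q.submatrix (fun _ : Fin 1 => (0:Fin 2)) id)
        (R.submatrix (fun _ : Fin 1 => (0:Fin 2)) (fun _ => (1:Fin 2)))).det *
      (Matrix.fromBlocks M (P.submatrix id (fun _ : Fin 1 => (0:Fin 2)))
        (Q.submatrix (fun _ : Fin 1 => (1:Fin 2)) id)
        (R.submatrix (fun _ : Fin 1 => (1:Fin 2)) (fun _ => (0:Fin 2)))).det := by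
  have hS : ∀ i j : Fin 2,
      (Matrix.fromBlocks M (P.submatrix id (fun _ : Fin 1 => j))
        (Q.submatrix (fun _ : Fin 1 => i) id)
        (R.submatrix (fun _ : Fin 1 => i) (fun _ => j))).det
        = M.det * (R - Q * ⅟M * P) i j := by
    intro i j
    rw [Matrix.det_fromBlocks₁₁]
    congr 1
    rw [Matrix.det_fin_one]
    simp [Matrix.sub_apply, Matrix.mul_apply, Matrix.submatrix_apply]
  rw [Matrix.det_fromBlocks₁₁, Matrix.det_fin_two, hS, hS, hS, hS]
  simp only [Matrix.sub_apply]
  ring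

noncomputable def Hmat (k a : ℕ) : Matrix (Fin k) (Fin k) ℚ :=
  Matrix.of fun i j => (catalan (a + i + j) : ℚ)

noncomputable def Dd (k a : ℕ) : ℚ := (Hmat k a).det

def eE (k : ℕ) : Fin k ⊕ Fin 2 ≃ Fin (k+2) where
  toFun x := match x with
    | .inl i => ⟨(i:ℕ)+1, by omega⟩
    | .inr j => if j = 0 then ⟨0, by omega⟩ else ⟨k+1, by omega⟩
  invFun y :=
    if h : (y:ℕ) = 0 then .inr 0
    else if h2 : (y:ℕ) = k+1 then .inr 1
    else .inl ⟨(y:ℕ)-1, by omega⟩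
  left_inv := by
    rintro (i | j)
    · have h1 : (i:ℕ) + 1 ≠ 0 := by omega
      have h2 : (i:ℕ) + 1 ≠ k + 1 := by omega
      simp only [h1, h2, dif_neg, not_false_iff]
      simp
    · fin_cases j <;> simp
  right_inv := by
    intro y
    by_cases h : (y:ℕ) = 0
    · simp only [h, dif_pos]
      simp [Fin.ext_iff, h.symm]
    · by_cases h2 : (y:ℕ) = k+1
      · simp only [h, h2, dif_neg, not_false_iff, dif_pos]
        simp [Fin.ext_iff, h2]
      · simp only [h, h2, dif_neg, not_false_iff]
        simp [Fin.ext_iff]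
        omega

def g0 (k : ℕ) : Fin k ⊕ Fin 1 ≃ Fin (k+1) where
  toFun x := match x with
    | .inl i => ⟨(i:ℕ)+1, by omega⟩
    | .inr _ => ⟨0, by omega⟩
  invFun y :=
    if h : (y:ℕ) = 0 then .inr 0
    else .inl ⟨(y:ℕ)-1, by omega⟩
  left_inv := by
    rintro (i | j)
    · have h1 : (i:ℕ) + 1 ≠ 0 := by omega
      simp only [h1, dif_neg, not_false_iff]
      simp
    · fin_cases j <;> simp
  right_inv := by
    intro y
    by_cases h : (y:ℕ) = 0
    · simp only [h, dif_pos]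
      simp [Fin.ext_iff, h.symm]
    · simp only [h, dif_neg, not_false_iff]
      simp [Fin.ext_iff]
      omega

def g1 (k : ℕ) : Fin k ⊕ Fin 1 ≃ Fin (k+1) where
  toFun x := match x with
    | .inl i => ⟨(i:ℕ), by omega⟩
    | .inr _ => ⟨k, by omega⟩
  invFun y :=
    if h : (y:ℕ) = k then .inr 0
    else .inl ⟨(y:ℕ), by omega⟩
  left_inv := by
    rintro (i | j)
    · have h1 : (i:ℕ) ≠ k := by omega
      simp only [h1, dif_neg, not_false_iff]
    · fin_cases j <;> simp
  right_inv := by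
    intro y
    by_cases h : (y:ℕ) = k
    · simp only [h, dif_pos]
      simp [Fin.ext_iff, h]
    · simp only [h, dif_neg, not_false_iff]

lemma Hmat_dj (k a : ℕ) (hinv : IsUnit (Hmat k (a+2)).det) :
    Dd (k+2) a * Dd k (a+2) =
      Dd (k+1) a * Dd (k+1) (a+2) - (Dd (k+1) (a+1))^2 := by
  classical
  set M : Matrix (Fin k) (Fin k) ℚ := Hmat k (a+2) with hM
  haveI : Invertible M := M.invertibleOfIsUnitDet hinv
  set P : Matrix (Fin k) (Fin 2) ℚ :=
    Matrix.of (fun i j => (catalan (a + ((i:ℕ)+1) + (if j = 0 then 0 else k+1)) : ℚ)) with hP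
  set Q : Matrix (Fin 2) (Fin k) ℚ :=
    Matrix.of (fun i j => (catalan (a + (if i = 0 then 0 else k+1) + ((j:ℕ)+1)) : ℚ)) with hQ
  set R : Matrix (Fin 2) (Fin 2) ℚ :=
    Matrix.of (fun i j => (catalan (a + (if i = 0 then 0 else k+1)
      + (if j = 0 then 0 else k+1)) : ℚ)) with hR
  have hA : (Hmat (k+2) a).submatrix (eE k) (eE k) = Matrix.fromBlocks M P Q R := by
    ext x y
    rcases x with i | i <;> rcases y with j | j
    · simp [Hmat, eE, Matrix.submatrix_apply, hM]
      congr 1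
      omega
    · fin_cases j <;>
      · simp [Hmat, eE, Matrix.submatrix_apply, hP]
    · fin_cases i <;>
      · simp [Hmat, eE, Matrix.submatrix_apply, hQ]
    · fin_cases i <;> fin_cases j <;>
      · simp [Hmat, eE, Matrix.submatrix_apply, hR]
  have hdetA : (Matrix.fromBlocks M P Q R).det = Dd (k+2) a := by
    rw [← hA, Matrix.det_submatrix_equiv_self]
    rfl
  have hB00 : (Hmat (k+1) a).submatrix (g0 k) (g0 k)
      = Matrix.fromBlocks M (P.submatrix id (fun _ : Fin 1 => (0:Fin 2)))
        (Q.submatrix (fun _ : Fin 1 => (0:Fin 2)) id)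
        (R.submatrix (fun _ : Fin 1 => (0:Fin 2)) (fun _ => (0:Fin 2))) := by
    ext x y
    rcases x with i | i <;> rcases y with j | j
    · simp [Hmat, g0, Matrix.submatrix_apply, hM]
      congr 1
      omega
    · simp [Hmat, g0, Matrix.submatrix_apply, hP]
    · simp [Hmat, g0, Matrix.submatrix_apply, hQ]
    · simp [Hmat, g0, Matrix.submatrix_apply, hR]
  have hB11 : (Hmat (k+1) (a+2)).submatrix (g1 k) (g1 k)
      = Matrix.fromBlocks M (P.submatrix id (fun _ : Fin 1 => (1:Fin 2)))
        (Q.submatrix (fun _ : Fin 1 => (1:Fin 2)) id)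
        (R.submatrix (fun _ : Fin 1 => (1:Fin 2)) (fun _ => (1:Fin 2))) := by
    ext x y
    rcases x with i | i <;> rcases y with j | j
    · simp [Hmat, g1, Matrix.submatrix_apply, hM]
    · simp [Hmat, g1, Matrix.submatrix_apply, hP]
      congr 1
      omega
    · simp [Hmat, g1, Matrix.submatrix_apply, hQ]
      congr 1
      omega
    · simp [Hmat, g1, Matrix.submatrix_apply, hR]
      congr 1
      omega
  have hB01 : (Hmat (k+1) (a+1)).submatrix (g0 k) (g1 k)
      = Matrix.fromBlocks M (P.submatrix id (fun _ : Fin 1 => (1:Fin 2)))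
        (Q.submatrix (fun _ : Fin 1 => (0:Fin 2)) id)
        (R.submatrix (fun _ : Fin 1 => (0:Fin 2)) (fun _ => (1:Fin 2))) := by
    ext x y
    rcases x with i | i <;> rcases y with j | j
    · simp [Hmat, g0, g1, Matrix.submatrix_apply, hM]
      congr 1
      omega
    · simp [Hmat, g0, g1, Matrix.submatrix_apply, hP]
      congr 1
      omega
    · simp [Hmat, g0, g1, Matrix.submatrix_apply, hQ]
      congr 1
      omega
    · simp [Hmat, g0, g1, Matrix.submatrix_apply, hR]
      congr 1
      omega
  have hB10T : (Matrix.fromBlocks M (P.submatrix id (fun _ : Fin 1 => (0:Fin 2)))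
        (Q.submatrix (fun _ : Fin 1 => (1:Fin 2)) id)
        (R.submatrix (fun _ : Fin 1 => (1:Fin 2)) (fun _ => (0:Fin 2))))
      = (Matrix.fromBlocks M (P.submatrix id (fun _ : Fin 1 => (1:Fin 2)))
        (Q.submatrix (fun _ : Fin 1 => (0:Fin 2)) id)
        (R.submatrix (fun _ : Fin 1 => (0:Fin 2)) (fun _ => (1:Fin 2))))ᵀ := by
    ext x y
    rcases x with i | i <;> rcases y with j | j <;>
      simp [Matrix.transpose_apply, Matrix.submatrix_apply, hM, hP, hQ, hR, Hmat] <;>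
      · congr 1
        omega
  -- determinant values
  have hdet00 : (Matrix.fromBlocks M (P.submatrix id (fun _ : Fin 1 => (0:Fin 2)))
        (Q.submatrix (fun _ : Fin 1 => (0:Fin 2)) id)
        (R.submatrix (fun _ : Fin 1 => (0:Fin 2)) (fun _ => (0:Fin 2)))).det = Dd (k+1) a := by
    rw [← hB00, Matrix.det_submatrix_equiv_self]
    rfl
  have hdet11 : (Matrix.fromBlocks M (P.submatrix id (fun _ : Fin 1 => (1:Fin 2)))
        (Q.submatrix (fun _ : Fin 1 => (1:Fin 2)) id)
        (R.submatrix (fun _ : Fin 1 => (1:Fin 2)) (fun _ => (1:Fin 2)))).det = Dd (k+1) (a+2) := by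
    rw [← hB11, Matrix.det_submatrix_equiv_self]
    rfl
  -- the mixed one, up to sign
  set σ : Equiv.Perm (Fin k ⊕ Fin 1) := (g1 k).trans (g0 k).symm with hσ
  have hsub : (Hmat (k+1) (a+1)).submatrix (g0 k) (g1 k)
      = ((Hmat (k+1) (a+1)).submatrix (g0 k) (g0 k)).submatrix id σ := by
    rw [Matrix.submatrix_submatrix]
    congr 1
    ext x
    simp [hσ]
  have hdet01 : (Matrix.fromBlocks M (P.submatrix id (fun _ : Fin 1 => (1:Fin 2)))
        (Q.submatrix (fun _ : Fin 1 => (0:Fin 2)) id)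
        (R.submatrix (fun _ : Fin 1 => (0:Fin 2)) (fun _ => (1:Fin 2)))).det
      = ((Equiv.Perm.sign σ : ℤ) : ℚ) * Dd (k+1) (a+1) := by
    rw [← hB01, hsub, Matrix.det_permute', Matrix.det_submatrix_equiv_self]
    rfl
  have hs := schur2 M P Q R
  rw [hdetA, hdet00, hdet11, hdet01, hB10T, Matrix.det_transpose, hdet01] at hs
  have hMdet : M.det = Dd k (a+2) := rfl
  rw [hMdet] at hs
  rw [hs]
  rcases Int.units_eq_one_or (Equiv.Perm.sign σ) with h | h <;> rw [h] <;> push_cast <;> ring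


lemma Ff_k0 (a : ℕ) : Ff 0 a = 1 := by
  apply Finset.prod_eq_one
  intro i hi
  apply Finset.prod_eq_one
  intro j hj
  simp only [Finset.mem_Icc] at hi hj
  have h1 : (1:ℚ) ≤ (i:ℚ) := by exact_mod_cast hi.1
  have h2 : (0:ℚ) ≤ (j:ℚ) := by positivity
  rw [div_eq_one_iff_eq (by push_cast; nlinarith)]
  push_cast
  ring

lemma main_det (k : ℕ) : ∀ a, Dd k a = Ff k a := by
  induction k using Nat.strong_induction_on with
  | _ k ih =>
    match k with
    | 0 =>
      intro a
      rw [Ff_k0]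
      exact Matrix.det_isEmpty
    | 1 =>
      intro a
      have h : Dd 1 a = (catalan a : ℚ) := by
        rw [Dd, Matrix.det_fin_one]
        simp [Hmat]
      rw [h, Ff_catalan]
    | (k+2) =>
      intro a
      have h1 := ih k (by omega)
      have h2 := ih (k+1) (by omega)
      have hinv : IsUnit (Hmat k (a+2)).det := by
        rw [show (Hmat k (a+2)).det = Dd k (a+2) from rfl, h1 (a+2)]
        exact (Ff_pos k (a+2)).ne'.isUnit
      have hdj := Hmat_dj k a hinv
      rw [h1 (a+2), h2 a, h2 (a+2), h2 (a+1)] at hdj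
      have hrec := Ff_rec k a
      apply mul_right_cancel₀ (Ff_pos k (a+2)).ne'
      rw [hdj]
      exact hrec.symm

/-- The Hankel determinant of Catalan numbers counting type-A generalized
k-triangulations: `det(C_{n−i−j})_{i,j=1,…,k} = ∏_{1≤i≤j≤n−2k−1} (i+j+2k)/(i+j)`. -/
theorem stmt_18 (n k : ℕ) (h : 2 * k + 1 ≤ n) :
    Matrix.det (Matrix.of fun i j : Fin k =>
        (catalan (n - ((i : ℕ) + 1) - ((j : ℕ) + 1)) : ℚ)) =
      ∏ i ∈ Finset.Icc 1 (n - 2 * k - 1), ∏ j ∈ Finset.Icc i (n - 2 * k - 1),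
        (((i : ℚ) + (j : ℚ) + 2 * (k : ℚ)) / ((i : ℚ) + (j : ℚ))) := by
  have hrev : (Matrix.of fun i j : Fin k =>
        (catalan (n - ((i : ℕ) + 1) - ((j : ℕ) + 1)) : ℚ))
      = (Hmat k (n - 2*k)).submatrix Fin.revPerm Fin.revPerm := by
    ext i j
    have hi := i.is_lt
    have hj := j.is_lt
    simp [Hmat, Matrix.submatrix_apply, Fin.revPerm, Fin.rev]
    congr 1
    omega
  rw [hrev, Matrix.det_submatrix_equiv_self, show (Hmat k (n - 2*k)).det = Dd k (n - 2*k) from rfl,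
    main_det k (n - 2*k)]
  rw [Ff]
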